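/- Let l be an augmentation vector over F₂ = ZMod 2 of length n ≥ 3 that contains at least one entry equal to 1. Then l can be written as a ++ [1] ++ b such that the resolved list a⁺ ++ b⁺ (of length n−1) is an augmentation vector containing at least one entry equal to 1. -/

import Mathlib

/-- The matrix `M(a) = [[a,1],[1,0]]` over `F₂ = ZMod 2`. -/
def M (a : ZMod 2) : Matrix (Fin 2) (Fin 2) (ZMod 2) := !![a, 1; 1, 0]

/-- The ordered product `B(ε_1, …, ε_n) = M(ε_1)·M(ε_2)⋯M(ε_n)`. -/
def B (l : List (ZMod 2)) : Matrix (Fin 2) (Fin 2) (ZMod 2) := (l.map M).prod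

/-- A list is an augmentation vector if the `(0,0)` entry of `B(l)` equals `1`. -/
def IsAug (l : List (ZMod 2)) : Prop := B l 0 0 = 1

/-- Add `1` to the first entry of a list (identity on the empty list). -/
def bumpHead : List (ZMod 2) → List (ZMod 2)
  | [] => []
  | x :: xs => (x + 1) :: xs

/-- Add `1` to the last entry of a list (identity on the empty list). -/
def bumpLast (l : List (ZMod 2)) : List (ZMod 2) := (bumpHead l.reverse).reverse

lemma B_nil : B [] = 1 := rfl

lemma B_cons (x : ZMod 2) (xs : List (ZMod 2)) : B (x :: xs) = M x * B xs := by
  simp [B]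

lemma B_append (a b : List (ZMod 2)) : B (a ++ b) = B a * B b := by
  simp [B]

lemma bumpLast_concat (a : List (ZMod 2)) (x : ZMod 2) :
    bumpLast (a ++ [x]) = a ++ [x + 1] := by
  simp [bumpLast, bumpHead]

lemma key_mid : ∀ x y : ZMod 2, M x * M 1 * M y = M (x + 1) * M (y + 1) := by decide

lemma key_head_mat : ∀ y : ZMod 2, M 1 * M y = M (y + 1) + !![0, 0; y + 1, 1] := by decide

lemma key_tail_mat : ∀ x : ZMod 2, M x * M 1 = M (x + 1) + !![0, x + 1; 0, 1] := by decide

lemma head_key (y : ZMod 2) (X : Matrix (Fin 2) (Fin 2) (ZMod 2)) :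
    (M 1 * (M y * X)) 0 0 = (M (y + 1) * X) 0 0 := by
  rw [← mul_assoc, key_head_mat, Matrix.add_mul, Matrix.add_apply]
  have h : (!![0, 0; y + 1, 1] * X) 0 0 = 0 := by
    simp [Matrix.mul_apply, Fin.sum_univ_two]
  rw [h, add_zero]

lemma tail_key (x : ZMod 2) (X : Matrix (Fin 2) (Fin 2) (ZMod 2)) :
    (X * (M x * M 1)) 0 0 = (X * M (x + 1)) 0 0 := by
  rw [key_tail_mat, Matrix.mul_add, Matrix.add_apply]
  have h : (X * !![0, x + 1; 0, 1]) 0 0 = 0 := by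
    simp [Matrix.mul_apply, Fin.sum_univ_two]
  rw [h, add_zero]

/-- Any resolution preserves the `(0,0)` entry of `B`. -/
lemma aug_resolve (a b : List (ZMod 2)) :
    B (bumpLast a ++ bumpHead b) 0 0 = B (a ++ [1] ++ b) 0 0 := by
  rcases List.eq_nil_or_concat a with rfl | ⟨a', x, rfl⟩
  · rcases b with _ | ⟨y, b'⟩
    · decide
    · simp only [bumpLast, bumpHead, List.reverse_nil, List.nil_append, B_cons, B_nil,
        B_append, mul_one, List.append_nil]
      exact (head_key y (B b')).symm
  · simp only [List.concat_eq_append, bumpLast_concat]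
    rcases b with _ | ⟨y, b'⟩
    · simp only [bumpHead, List.append_nil, List.append_assoc, B_append, B_cons, B_nil,
        mul_one, mul_assoc]
      exact (tail_key x (B a')).symm
    · simp only [bumpHead, List.append_assoc, List.cons_append, List.nil_append,
        B_append, B_cons, B_nil, mul_one, mul_assoc]
      have h : M x * (M 1 * (M y * B b')) = M (x + 1) * (M (y + 1) * B b') := by
        rw [← mul_assoc, ← mul_assoc, key_mid, mul_assoc]
      rw [h]

lemma ne_cases : ∀ x y : ZMod 2, x ≠ y → (x = 1 ∧ y = 0) ∨ (x = 0 ∧ y = 1) := by decide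

lemma exists_adj (l : List (ZMod 2)) (h1 : (1 : ZMod 2) ∈ l) (h0 : (0 : ZMod 2) ∈ l) :
    ∃ a b : List (ZMod 2), l = a ++ [1, 0] ++ b ∨ l = a ++ [0, 1] ++ b := by
  induction l with
  | nil => simp at h1
  | cons x xs ih =>
    rcases xs with _ | ⟨y, rest⟩
    · simp at h1 h0
      exact absurd (h1.trans h0.symm) one_ne_zero
    · by_cases hxy : x = y
      · have h1' : (1 : ZMod 2) ∈ y :: rest := by
          rcases List.mem_cons.mp h1 with h | h
          · rw [← hxy, ← h]; exact List.mem_cons_self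
          · exact h
        have h0' : (0 : ZMod 2) ∈ y :: rest := by
          rcases List.mem_cons.mp h0 with h | h
          · rw [← hxy, ← h]; exact List.mem_cons_self
          · exact h
        obtain ⟨a, b, hc⟩ := ih h1' h0'
        refine ⟨x :: a, b, ?_⟩
        rcases hc with h | h
        · left; simp [h]
        · right; simp [h]
      · rcases ne_cases x y hxy with ⟨rfl, rfl⟩ | ⟨rfl, rfl⟩
        · exact ⟨[], rest, Or.inl rfl⟩
        · exact ⟨[], rest, Or.inr rfl⟩

/-- An augmentation vector of length `n ≥ 3` containing an entry `1` admits a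
resolution at an entry equal to `1` whose result is again an augmentation vector
containing an entry `1`. -/
theorem exists_good_resolution (n : ℕ) (hn : 3 ≤ n) (l : List (ZMod 2))
    (hlen : l.length = n) (haug : IsAug l) (h1 : (1 : ZMod 2) ∈ l) :
    ∃ a b : List (ZMod 2), l = a ++ [1] ++ b ∧
      IsAug (bumpLast a ++ bumpHead b) ∧ (1 : ZMod 2) ∈ bumpLast a ++ bumpHead b := by
  by_cases h0 : (0 : ZMod 2) ∈ l
  · obtain ⟨a, b, hc | hc⟩ := exists_adj l h1 h0
    · refine ⟨a, 0 :: b, by simp [hc], ?_, ?_⟩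
      · show B _ 0 0 = 1
        rw [aug_resolve]
        have : a ++ [1] ++ (0 :: b) = a ++ [1, 0] ++ b := by simp
        rw [this, ← hc]; exact haug
      · simp [bumpHead]
    · refine ⟨a ++ [0], b, by simp [hc], ?_, ?_⟩
      · show B _ 0 0 = 1
        rw [aug_resolve]
        have : a ++ [0] ++ [1] ++ b = a ++ [0, 1] ++ b := by simp
        rw [this, ← hc]; exact haug
      · rw [bumpLast_concat]; simp
  · have hall : ∀ x ∈ l, x = (1 : ZMod 2) := by
      intro x hx
      have : ∀ x : ZMod 2, x ≠ 0 → x = 1 := by decide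
      exact this x fun hx0 => h0 (hx0 ▸ hx)
    rcases l with _ | ⟨x, _ | ⟨y, _ | ⟨z, rest⟩⟩⟩ <;> simp at hlen <;> try omega
    have hx : x = 1 := hall x (by simp)
    have hy : y = 1 := hall y (by simp)
    have hz : z = 1 := hall z (by simp)
    refine ⟨[], y :: z :: rest, by simp [hx], ?_, ?_⟩
    · show B _ 0 0 = 1
      rw [aug_resolve]
      have : ([] : List (ZMod 2)) ++ [1] ++ (y :: z :: rest) = x :: y :: z :: rest := by
        simp [hx]
      rw [this]; exact haug
    · simp [bumpLast, bumpHead, hz]
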